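/- Let (X, {d_r}) satisfy the weaker d_r-axioms and suppose the family is non-degenerate: if d_r(x,y) = 0 for all r > 0 then x = y. Then there exists a quasi-metric ρ : X × X → [0,∞) — i.e. ρ(x,x) = 0, ρ(x,z) ≤ ρ(x,y) + ρ(y,z), and ρ(x,y) = 0 implies x = y — such that: (i) for all r > 0 and ε > 0 there exists ε' > 0 such that ρ(x,y) < ε' implies d_r(x,y) < ε; and (ii) for every ε > 0 there exist r > 0 and ε' > 0 such that d_r(x,y) < ε' implies ρ(x,y) < ε. -/

import Mathlib

open ENNReal

/-- The weaker `d_r`-axioms for a family of metric-like functions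
`d : ℝ → X → X → ℝ≥0∞` indexed by `r > 0`. -/
structure WeakerDr {X : Type*} (d : ℝ → X → X → ℝ≥0∞) : Prop where
  self : ∀ (x : X) (r : ℝ), 0 < r → d r x x = 0
  mono : ∀ (x y : X) (r₁ r₂ : ℝ), 0 < r₁ → r₁ ≤ r₂ → d r₁ x y ≤ d r₂ x y
  usc : ∀ (x y : X) (r ε : ℝ), 0 < r → 0 < ε → d r x y < ENNReal.ofReal ε →
    ∃ δ : ℝ, 0 < δ ∧ d (r + δ) x y < ENNReal.ofReal ε
  weaker_tri : ∀ (x y z : X) (r₁ r₂ r₃ : ℝ), 0 < r₁ → 0 < r₂ → 0 < r₃ →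
    d (r₁ + r₂ + r₃) x y < ENNReal.ofReal r₃ → d (r₁ + r₂ + r₃) y z < ENNReal.ofReal r₂ →
    d r₁ x z ≤ d (r₁ + r₂ + r₃) x y + d (r₁ + r₂ + r₃) y z

/-- The basic entourage `U_{r,ε} = {(x,y) | d_r(x,y) < ε}`. -/
def entourageDr {X : Type*} (d : ℝ → X → X → ℝ≥0∞) (r ε : ℝ) : Set (X × X) :=
  {p | d r p.1 p.2 < ENNReal.ofReal ε}

open Set Function List Filter NNReal

section ChainDist

variable {X : Type*}

/-- The chain distance associated to a premetric `f` (not necessarily symmetric). -/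
noncomputable def chainDist (f : X → X → ℝ≥0) (x y : X) : ℝ≥0 :=
  ⨅ l : List X, ((x::l).zipWith f (l ++ [y])).sum

theorem chainDist_le (f : X → X → ℝ≥0) (x y : X) : chainDist f x y ≤ f x y :=
  (ciInf_le (OrderBot.bddBelow _) []).trans_eq <| by simp

theorem chainDist_self (f : X → X → ℝ≥0) (hself : ∀ x, f x x = 0) (x : X) :
    chainDist f x x = 0 :=
  nonpos_iff_eq_zero.1 <| (ciInf_le (OrderBot.bddBelow _) []).trans_eq <| by simp [hself]

theorem chainDist_triangle (f : X → X → ℝ≥0) (x y z : X) :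
    chainDist f x z ≤ chainDist f x y + chainDist f y z := by
  unfold chainDist
  refine NNReal.le_iInf_add_iInf fun lxy lyz ↦ ?_
  calc
    ⨅ l, (zipWith f (x::l) (l ++ [z])).sum ≤
        (zipWith f (x::lxy ++ y::lyz) ((lxy ++ y::lyz) ++ [z])).sum :=
      ciInf_le (OrderBot.bddBelow _) (lxy ++ y::lyz)
    _ = (zipWith f (x::lxy) (lxy ++ [y])).sum + (zipWith f (y::lyz) (lyz ++ [z])).sum := by
      rw [← sum_append, ← zipWith_append, cons_append, ← @singleton_append _ y, append_assoc,
        append_assoc, append_assoc]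
      rw [length_cons, length_append, length_singleton]

theorem le_two_mul_chainDist (f : X → X → ℝ≥0) (dist_self : ∀ x, f x x = 0)
    (hd : ∀ x₁ x₂ x₃ x₄, f x₁ x₄ ≤ 2 * max (f x₁ x₂) (max (f x₂ x₃) (f x₃ x₄))) (x y : X) :
    f x y ≤ 2 * chainDist f x y := by
  rw [chainDist, NNReal.mul_iInf]
  refine le_ciInf fun l => ?_
  have hd₀_trans : Transitive fun x y => f x y = 0 := by
    intro a b c hab hbc
    rw [← nonpos_iff_eq_zero]
    simpa only [nonpos_iff_eq_zero, hab, hbc, dist_self c, max_self, mul_zero] using hd a b c c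
  haveI : IsTrans X fun x y => f x y = 0 := ⟨hd₀_trans⟩
  induction' hn : length l using Nat.strong_induction_on with n ihn generalizing x y l
  subst n
  set L := zipWith f (x::l) (l ++ [y])
  have hL_len : length L = length l + 1 := by simp [L]
  rcases eq_or_ne (f x y) 0 with hd₀ | hd₀
  · simp only [hd₀, zero_le]
  rsuffices ⟨z, z', hxz, hzz', hz'y⟩ : ∃ z z' : X, f x z ≤ L.sum ∧ f z z' ≤ L.sum ∧ f z' y ≤ L.sum
  · exact (hd x z z' y).trans (mul_le_mul_right (max_le hxz (max_le hzz' hz'y)) _)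
  set s : Set ℕ := { m : ℕ | 2 * (take m L).sum ≤ L.sum }
  have hs₀ : 0 ∈ s := by simp [s]
  have hsne : s.Nonempty := ⟨0, hs₀⟩
  obtain ⟨M, hMl, hMs⟩ : ∃ M ≤ length l, IsGreatest s M := by
    have hs_ub : length l ∈ upperBounds s := by
      intro m hm
      rw [← not_lt, Nat.lt_iff_add_one_le, ← hL_len]
      intro hLm
      rw [mem_setOf_eq, take_of_length_le hLm, two_mul, add_le_iff_nonpos_left, nonpos_iff_eq_zero,
          sum_eq_zero_iff, ← forall_iff_forall_mem, forall_zipWith,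
          ← isChain_cons_append_singleton_iff_forall₂]
          at hm <;>
        [skip; simp]
      exact hd₀ (hm.rel_cons (mem_append.2 <| Or.inr <| mem_singleton_self _))
    have hs_bdd : BddAbove s := ⟨length l, hs_ub⟩
    exact ⟨sSup s, csSup_le hsne hs_ub, ⟨Nat.sSup_mem hsne hs_bdd, fun k => le_csSup hs_bdd⟩⟩
  have hM_lt : M < length L := by rwa [hL_len, Nat.lt_succ_iff]
  have hM_ltx : M < length (x::l) := lt_length_left_of_zipWith hM_lt
  have hM_lty : M < length (l ++ [y]) := lt_length_right_of_zipWith hM_lt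
  refine ⟨(x::l)[M], (l ++ [y])[M], ?_, ?_, ?_⟩
  · cases M with
    | zero =>
      simp [dist_self, List.get]
    | succ M =>
      rw [Nat.succ_le_iff] at hMl
      have hMl' : length (take M l) = M := length_take.trans (min_eq_left hMl.le)
      refine (ihn _ hMl _ _ _ hMl').trans ?_
      convert! hMs.1.out
      rw [take_zipWith, take, take_succ, getElem?_append_left hMl, getElem?_eq_getElem hMl,
        ← Option.coe_def, Option.toList_some, take_append_of_le_length hMl.le, getElem_cons_succ]
  · exact single_le_sum (fun x _ => zero_le) _ (mem_iff_get.2 ⟨⟨M, hM_lt⟩, getElem_zipWith⟩)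
  · rcases hMl.eq_or_lt with (rfl | hMl)
    · simp only [getElem_append_right le_rfl, sub_self, getElem_singleton, dist_self, zero_le]
    rw [getElem_append_left hMl]
    have hlen : length (drop (M + 1) l) = length l - (M + 1) := length_drop
    have hlen_lt : length l - (M + 1) < length l := Nat.sub_lt_of_pos_le M.succ_pos hMl
    refine (ihn _ hlen_lt _ y _ hlen).trans ?_
    rw [cons_getElem_drop_succ]
    have hMs' : L.sum ≤ 2 * (L.take (M + 1)).sum :=
      not_lt.1 fun h => (hMs.2 h.le).not_gt M.lt_succ_self
    rw [← sum_take_add_sum_drop L (M + 1), two_mul, add_le_add_iff_left, ← add_le_add_iff_right,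
      sum_take_add_sum_drop, ← two_mul] at hMs'
    convert! hMs'
    rwa [drop_zipWith, drop, drop_append_of_le_length]

end ChainDist

theorem stmt_14 {X : Type*} (d : ℝ → X → X → ℝ≥0∞) (h : WeakerDr d)
    (hnd : ∀ x y : X, (∀ r : ℝ, 0 < r → d r x y = 0) → x = y) :
    ∃ ρ : X → X → ℝ,
      (∀ x y : X, 0 ≤ ρ x y) ∧
      (∀ x : X, ρ x x = 0) ∧
      (∀ x y z : X, ρ x z ≤ ρ x y + ρ y z) ∧
      (∀ x y : X, ρ x y = 0 → x = y) ∧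
      (∀ r ε : ℝ, 0 < r → 0 < ε → ∃ ε' : ℝ, 0 < ε' ∧
        ∀ x y : X, ρ x y < ε' → d r x y < ENNReal.ofReal ε) ∧
      (∀ ε : ℝ, 0 < ε → ∃ r ε' : ℝ, 0 < r ∧ 0 < ε' ∧
        ∀ x y : X, d r x y < ENNReal.ofReal ε' → ρ x y < ε) := by
  classical
  -- The basic entourages `V n = U_{n+2, 2^{-n}}`.
  set V : ℕ → Set (X × X) :=
    fun n => {p | d ((n : ℝ) + 2) p.1 p.2 < ENNReal.ofReal ((1/2 : ℝ) ^ n)} with hV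
  have hpow_pos : ∀ n : ℕ, (0 : ℝ) < (1/2 : ℝ) ^ n := fun n => by positivity
  have hpow_le_one : ∀ n : ℕ, ((1/2 : ℝ) ^ n) ≤ 1 := fun n =>
    pow_le_one₀ (by norm_num) (by norm_num)
  have hVanti : ∀ n : ℕ, V (n + 1) ⊆ V n := by
    intro n p hp
    have h1 : d ((n : ℝ) + 2) p.1 p.2 ≤ d (((n : ℕ) + 1 : ℕ) + 2) p.1 p.2 :=
      h.mono _ _ _ _ (by positivity) (by push_cast; linarith)
    refine lt_of_le_of_lt h1 (lt_of_lt_of_le hp (ENNReal.ofReal_le_ofReal ?_))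
    exact pow_le_pow_of_le_one (by norm_num) (by norm_num) (Nat.le_succ n)
  have hVanti' : ∀ m n : ℕ, m ≤ n → V n ⊆ V m := by
    intro m n hmn
    induction n with
    | zero => simpa [Nat.le_zero.1 hmn] using Set.Subset.rfl
    | succ k ih =>
      rcases Nat.lt_or_ge m (k+1) with hm | hm
      · exact (hVanti k).trans (ih (Nat.lt_succ_iff.1 hm))
      · have : m = k + 1 := le_antisymm hmn hm
        subst this; exact Set.Subset.rfl
  -- Composition: two steps in `V (n+1)` give a step in `V n`.
  have hVcomp : ∀ (n : ℕ) (x y z : X), (x, y) ∈ V (n + 1) → (y, z) ∈ V (n + 1) →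
      (x, z) ∈ V n := by
    intro n x y z hxy hyz
    set e : ℝ := (1/2 : ℝ) ^ (n + 1) with he
    have he_pos : 0 < e := hpow_pos (n+1)
    have hee : e + e = (1/2 : ℝ) ^ n := by rw [he, pow_succ]; ring
    have hRle : ((n : ℝ) + 2) + e + e ≤ ((n : ℕ) + 1 : ℕ) + 2 := by
      push_cast; nlinarith [hpow_le_one n, hee]
    have hR_pos : 0 < ((n : ℝ) + 2) + e + e := by positivity
    have hxy' : d (((n : ℝ) + 2) + e + e) x y < ENNReal.ofReal e :=
      lt_of_le_of_lt (h.mono _ _ _ _ hR_pos hRle) hxy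
    have hyz' : d (((n : ℝ) + 2) + e + e) y z < ENNReal.ofReal e :=
      lt_of_le_of_lt (h.mono _ _ _ _ hR_pos hRle) hyz
    have htri := h.weaker_tri x y z ((n : ℝ) + 2) e e (by positivity) he_pos he_pos hxy' hyz'
    have : d ((n : ℝ) + 2) x z < ENNReal.ofReal e + ENNReal.ofReal e :=
      lt_of_le_of_lt htri (ENNReal.add_lt_add hxy' hyz')
    rwa [← ENNReal.ofReal_add he_pos.le he_pos.le, hee] at this
  -- The sequence `W n = V (2n)` satisfies the triple composition property.
  set W : ℕ → Set (X × X) := fun n => V (2 * n) with hW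
  have hWanti : ∀ m n : ℕ, m ≤ n → W n ⊆ W m := fun m n hmn =>
    hVanti' _ _ (by omega)
  have hWcomp : ∀ (n : ℕ) (x y z w : X), (x, y) ∈ W (n + 1) → (y, z) ∈ W (n + 1) →
      (z, w) ∈ W (n + 1) → (x, w) ∈ W n := by
    intro n x y z w hxy hyz hzw
    simp only [hW] at hxy hyz hzw ⊢
    have e1 : 2 * (n + 1) = (2 * n + 1) + 1 := by ring
    rw [e1] at hxy hyz hzw
    have h1 : (y, w) ∈ V (2 * n + 1) := hVcomp (2*n+1) y z w hyz hzw
    have h2 : (x, y) ∈ V (2 * n + 1) := hVanti (2*n+1) hxy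
    exact hVcomp (2*n) x y w h2 h1
  have hmemW : ∀ (n : ℕ) (x y : X), (x, y) ∈ W n ↔
      d ((2 * n : ℝ) + 2) x y < ENNReal.ofReal ((1/2 : ℝ) ^ (2 * n)) := by
    intro n x y
    simp only [hW, hV, Set.mem_setOf_eq]
    norm_cast
  have hWself : ∀ (n : ℕ) (x : X), (x, x) ∈ W n := by
    intro n x
    rw [hmemW]
    rw [h.self x _ (by positivity)]
    exact ENNReal.ofReal_pos.2 (hpow_pos _)
  -- The premetric `f`.
  set f : X → X → ℝ≥0 := fun x y => if h : ∃ n, (x, y) ∉ W n then (1 / 2) ^ Nat.find h else 0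
    with hf
  have hr : (1 / 2 : ℝ≥0) ∈ Set.Ioo (0 : ℝ≥0) 1 := ⟨half_pos one_pos, NNReal.half_lt_self one_ne_zero⟩
  have hfself : ∀ x, f x x = 0 := by
    intro x
    simp only [hf]
    rw [dif_neg]
    push_neg
    exact fun n => hWself n x
  have hle_f : ∀ {x y : X} {n : ℕ}, (1 / 2 : ℝ≥0) ^ n ≤ f x y ↔ (x, y) ∉ W n := by
    intro x y n
    simp only [hf]
    split_ifs with hh
    · rw [StrictAnti.le_iff_ge (pow_right_strictAnti₀ hr.1 hr.2), Nat.find_le_iff]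
      exact ⟨fun ⟨m, hmn, hm⟩ hn => hm (hWanti _ _ hmn hn), fun h => ⟨n, le_rfl, h⟩⟩
    · push_neg at hh
      simp only [hh, not_true, (pow_pos hr.1 _).not_ge]
  have hfour : ∀ x₁ x₂ x₃ x₄ : X, f x₁ x₄ ≤ 2 * max (f x₁ x₂) (max (f x₂ x₃) (f x₃ x₄)) := by
    intro x₁ x₂ x₃ x₄
    by_cases H : ∃ n, (x₁, x₄) ∉ W n
    · refine (dif_pos H).trans_le ?_
      rw [← div_le_iff₀' zero_lt_two, ← mul_one_div ((_ : ℝ≥0) ^ _), ← pow_succ]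
      simp only [le_max_iff, hle_f, ← not_and_or]
      rintro ⟨h₁₂, h₂₃, h₃₄⟩
      refine Nat.find_spec H (hWcomp (Nat.find H) x₁ x₂ x₃ x₄ ?_ ?_ ?_) <;> assumption
    · exact (dif_neg H).trans_le zero_le
  -- The quasi-metric.
  refine ⟨fun x y => ((chainDist f x y : ℝ≥0) : ℝ), fun x y => (chainDist f x y).coe_nonneg,
    ?_, ?_, ?_, ?_, ?_⟩
  · intro x
    show ((chainDist f x x : ℝ≥0) : ℝ) = 0
    rw [chainDist_self f hfself]; simp
  · intro x y z
    show ((chainDist f x z : ℝ≥0) : ℝ) ≤ _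
    rw [← NNReal.coe_add, NNReal.coe_le_coe]
    exact chainDist_triangle f x y z
  · -- separation
    intro x y hxy
    have hc0 : chainDist f x y = 0 := by
      have hxy' : ((chainDist f x y : ℝ≥0) : ℝ) = 0 := hxy
      exact_mod_cast hxy'
    have hf0 : f x y = 0 := by
      have := le_two_mul_chainDist f hfself hfour x y
      rw [hc0, mul_zero] at this
      exact nonpos_iff_eq_zero.1 this
    have hall : ∀ n, (x, y) ∈ W n := by
      intro n
      by_contra hn
      have := hle_f.2 hn
      rw [hf0] at this
      exact absurd this (pow_pos hr.1 _).not_ge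
    refine hnd x y fun r hr' => ?_
    -- show `d r x y < ofReal ε` for every `ε > 0`
    have key : ∀ ε : ℝ, 0 < ε → d r x y < ENNReal.ofReal ε := by
      intro ε hε
      obtain ⟨n₁, hn₁⟩ := exists_pow_lt_of_lt_one hε (by norm_num : (1/2 : ℝ) < 1)
      set n : ℕ := max n₁ ⌈r⌉₊ with hn
      have hrn : r ≤ (2 * n : ℝ) + 2 := by
        have := Nat.le_ceil r
        have h2 : (⌈r⌉₊ : ℝ) ≤ n := by exact_mod_cast Nat.cast_le.2 (le_max_right n₁ ⌈r⌉₊)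
        nlinarith [Nat.cast_nonneg (α := ℝ) n]
      have hmem := (hmemW n x y).1 (hall n)
      have hd1 : d r x y ≤ d ((2 * n : ℝ) + 2) x y := h.mono _ _ _ _ hr' hrn
      have hd2 : ((1/2 : ℝ) ^ (2 * n)) ≤ (1/2 : ℝ) ^ n₁ :=
        pow_le_pow_of_le_one (by norm_num) (by norm_num) (by omega)
      calc d r x y ≤ d ((2 * n : ℝ) + 2) x y := hd1
        _ < ENNReal.ofReal ((1/2 : ℝ) ^ (2 * n)) := hmem
        _ ≤ ENNReal.ofReal ε := ENNReal.ofReal_le_ofReal (le_of_lt (lt_of_le_of_lt hd2 hn₁))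
    by_contra h0
    have hlt1 : d r x y < ENNReal.ofReal 1 := key 1 one_pos
    have hne_top : d r x y ≠ ⊤ := (hlt1.trans ENNReal.ofReal_lt_top).ne
    have hpos : 0 < (d r x y).toReal := ENNReal.toReal_pos h0 hne_top
    have := key _ hpos
    rw [ENNReal.ofReal_toReal hne_top] at this
    exact lt_irrefl _ this
  · -- (i)
    intro r ε hr' hε
    obtain ⟨n₁, hn₁⟩ := exists_pow_lt_of_lt_one hε (by norm_num : (1/2 : ℝ) < 1)
    set n : ℕ := max n₁ ⌈r⌉₊ with hn
    refine ⟨((1/2 : ℝ)) ^ (n + 1), by positivity, fun x y hxy => ?_⟩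
    have hfxy : f x y < (1/2 : ℝ≥0) ^ n := by
      have h2 := le_two_mul_chainDist f hfself hfour x y
      have hc : (chainDist f x y : ℝ) < (1/2 : ℝ) ^ (n + 1) := hxy
      have hc' : chainDist f x y < (1/2 : ℝ≥0) ^ (n + 1) := by
        rw [← NNReal.coe_lt_coe]; push_cast; exact hc
      calc f x y ≤ 2 * chainDist f x y := h2
        _ < 2 * (1/2 : ℝ≥0) ^ (n + 1) := by
            exact mul_lt_mul_of_pos_left hc' two_pos
        _ = (1/2 : ℝ≥0) ^ n := by
            rw [pow_succ]
            rw [mul_comm]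
            rw [mul_assoc]
            norm_num
    have hmem : (x, y) ∈ W n := by
      by_contra hn'
      exact absurd (hle_f.2 hn') hfxy.not_ge
    have hmem' := (hmemW n x y).1 hmem
    have hrn : r ≤ (2 * n : ℝ) + 2 := by
      have := Nat.le_ceil r
      have h2 : (⌈r⌉₊ : ℝ) ≤ n := by exact_mod_cast Nat.cast_le.2 (le_max_right n₁ ⌈r⌉₊)
      nlinarith [Nat.cast_nonneg (α := ℝ) n]
    have hd2 : ((1/2 : ℝ) ^ (2 * n)) ≤ (1/2 : ℝ) ^ n₁ :=
      pow_le_pow_of_le_one (by norm_num) (by norm_num) (by omega)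
    calc d r x y ≤ d ((2 * n : ℝ) + 2) x y := h.mono _ _ _ _ hr' hrn
      _ < ENNReal.ofReal ((1/2 : ℝ) ^ (2 * n)) := hmem'
      _ ≤ ENNReal.ofReal ε := ENNReal.ofReal_le_ofReal (le_of_lt (lt_of_le_of_lt hd2 hn₁))
  · -- (ii)
    intro ε hε
    obtain ⟨n, hn⟩ := exists_pow_lt_of_lt_one hε (by norm_num : (1/2 : ℝ) < 1)
    refine ⟨(2 * n : ℝ) + 2, (1/2 : ℝ) ^ (2 * n), by positivity, by positivity, fun x y hxy => ?_⟩
    have hmem : (x, y) ∈ W n := (hmemW n x y).2 hxy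
    have hfle : ¬ ((1/2 : ℝ≥0) ^ n ≤ f x y) := fun hc => (hle_f.1 hc) hmem
    push_neg at hfle
    have hcd : chainDist f x y < (1/2 : ℝ≥0) ^ n := lt_of_le_of_lt (chainDist_le f x y) hfle
    have : ((chainDist f x y : ℝ≥0) : ℝ) < (1/2 : ℝ) ^ n := by
      rw [← NNReal.coe_lt_coe] at hcd; push_cast at hcd; exact hcd
    exact lt_trans this hn
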